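/- There exist universal constants C₁, C₂ ≥ 1 such that for every n ≥ 1 and every monotone norm N on ℝⁿ, there exists a monotone norm M on ℝⁿ that is (C₁·n)-supermodular and satisfies N(x) ≤ M(x) ≤ C₂·N(x) for all x ∈ ℝⁿ with nonnegative coordinates. -/

import Mathlib

noncomputable section

/-- A monotone norm on ℝⁿ: subadditive, absolutely homogeneous, point-separating, and
monotone on the nonnegative orthant. -/
def IsMonotoneNorm {n : ℕ} (N : (Fin n → ℝ) → ℝ) : Prop :=
  (∀ x y, N (x + y) ≤ N x + N y) ∧
  (∀ (c : ℝ) (x), N (c • x) = |c| * N x) ∧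
  (∀ x, N x = 0 → x = 0) ∧
  (∀ x y : Fin n → ℝ, 0 ≤ x → x ≤ y → N x ≤ N y)

/-- `N` is `p`-supermodular: `N(u+v+w)^p − N(u+v)^p ≥ N(u+w)^p − N(u)^p` for all
nonnegative `u, v, w`. -/
def IsPSupermodular {n : ℕ} (N : (Fin n → ℝ) → ℝ) (p : ℝ) : Prop :=
  ∀ u v w : Fin n → ℝ, 0 ≤ u → 0 ≤ v → 0 ≤ w →
    N (u + w) ^ p - N u ^ p ≤ N (u + v + w) ^ p - N (u + v) ^ p

namespace MNA

variable {n : ℕ}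

/-- dot product -/
def dot (x y : Fin n → ℝ) : ℝ := ∑ i, x i * y i

def absv (x : Fin n → ℝ) : Fin n → ℝ := fun i => |x i|

lemma dot_nonneg {x y : Fin n → ℝ} (hx : 0 ≤ x) (hy : 0 ≤ y) : 0 ≤ dot x y :=
  Finset.sum_nonneg fun i _ => mul_nonneg (hx i) (hy i)

lemma dot_mono_right {x y z : Fin n → ℝ} (hx : 0 ≤ x) (h : y ≤ z) : dot x y ≤ dot x z :=
  Finset.sum_le_sum fun i _ => mul_le_mul_of_nonneg_left (h i) (hx i)

lemma dot_mono_left {x y z : Fin n → ℝ} (hz : 0 ≤ z) (h : x ≤ y) : dot x z ≤ dot y z :=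
  Finset.sum_le_sum fun i _ => mul_le_mul_of_nonneg_right (h i) (hz i)

lemma dot_add_left (x y z : Fin n → ℝ) : dot (x + y) z = dot x z + dot y z := by
  simp [dot, add_mul, Finset.sum_add_distrib]

lemma dot_sub_right (x y z : Fin n → ℝ) : dot x (y - z) = dot x y - dot x z := by
  simp [dot, mul_sub, Finset.sum_sub_distrib]

lemma dot_smul_left (c : ℝ) (x y : Fin n → ℝ) : dot (c • x) y = c * dot x y := by
  simp [dot, Finset.mul_sum, mul_assoc]

lemma absv_nonneg (x : Fin n → ℝ) : 0 ≤ absv x := fun i => abs_nonneg _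

lemma absv_of_nonneg {x : Fin n → ℝ} (hx : 0 ≤ x) : absv x = x := by
  funext i; exact abs_of_nonneg (hx i)

lemma absv_smul (c : ℝ) (x : Fin n → ℝ) : absv (c • x) = |c| • absv x := by
  funext i; simp [absv, abs_mul]

lemma absv_add_le (x y : Fin n → ℝ) : absv (x + y) ≤ absv x + absv y := fun i => by
  simpa [absv] using abs_add_le (x i) (y i)

/-- binomial monotonicity: (a+c)^n - a^n is monotone in a for a,c ≥ 0 -/
lemma pow_diff_mono {a a' c : ℝ} (m : ℕ) (ha : 0 ≤ a) (hc : 0 ≤ c) (haa : a ≤ a') :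
    (a + c) ^ m - a ^ m ≤ (a' + c) ^ m - a' ^ m := by
  have ha' : 0 ≤ a' := le_trans ha haa
  have h1 : (a + c) ^ m = ∑ k ∈ Finset.range (m + 1), a ^ k * c ^ (m - k) * (m.choose k) :=
    add_pow a c m
  have h2 : (a' + c) ^ m = ∑ k ∈ Finset.range (m + 1), a' ^ k * c ^ (m - k) * (m.choose k) :=
    add_pow a' c m
  rw [h1, h2, Finset.sum_range_succ, Finset.sum_range_succ]
  simp only [Nat.sub_self, pow_zero, Nat.choose_self, Nat.cast_one, mul_one]
  have key : ∑ k ∈ Finset.range m, a ^ k * c ^ (m - k) * (m.choose k) ≤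
      ∑ k ∈ Finset.range m, a' ^ k * c ^ (m - k) * (m.choose k) :=
    Finset.sum_le_sum fun k _ => by
      have h := pow_le_pow_left₀ ha haa k
      have hnn : (0:ℝ) ≤ c ^ (m - k) * (m.choose k) := by positivity
      calc a ^ k * c ^ (m - k) * (m.choose k) = a ^ k * (c ^ (m - k) * (m.choose k)) := by ring
        _ ≤ a' ^ k * (c ^ (m - k) * (m.choose k)) := mul_le_mul_of_nonneg_right h hnn
        _ = a' ^ k * c ^ (m - k) * (m.choose k) := by ring
  linarith

section Norm

variable {N : (Fin n → ℝ) → ℝ} (hN : IsMonotoneNorm N)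
include hN

lemma N_zero : N 0 = 0 := by
  have := hN.2.1 0 0
  simpa using this

lemma N_nonneg (x : Fin n → ℝ) : 0 ≤ N x := by
  have h1 := hN.1 x (-x)
  have h2 : N (-x) = N x := by
    have := hN.2.1 (-1) x
    simpa using this
  have h0 : N 0 = 0 := N_zero hN
  have : x + -x = 0 := by ring
  rw [this, h0] at h1
  linarith [h1, h2]

lemma N_neg (x : Fin n → ℝ) : N (-x) = N x := by
  have := hN.2.1 (-1) x
  simpa using this

def e (i : Fin n) : Fin n → ℝ := Pi.single i 1

omit hN in
lemma e_nonneg (i : Fin n) : 0 ≤ e i := by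
  intro j
  by_cases h : j = i <;> simp [e, Pi.single_apply, h]

lemma N_e_pos (i : Fin n) : 0 < N (e i) := by
  rcases lt_or_eq_of_le (N_nonneg hN (e i)) with h | h
  · exact h
  · exfalso
    have := hN.2.2.1 (e i) h.symm
    have h1 : e i i = 1 := by simp [e]
    rw [this] at h1
    simp at h1

/-- coordinate lower bound : x i * N(e i) ≤ N x for x ≥ 0 -/
lemma coord_le (x : Fin n → ℝ) (hx : 0 ≤ x) (i : Fin n) : x i * N (e i) ≤ N x := by
  have h1 : N (x i • e i) = x i * N (e i) := by
    rw [hN.2.1]; rw [abs_of_nonneg (hx i)]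
  have h2 : (0:Fin n → ℝ) ≤ x i • e i := by
    intro j
    simp only [Pi.smul_apply, smul_eq_mul, Pi.zero_apply]
    exact mul_nonneg (hx i) (e_nonneg i j)
  have h3 : x i • e i ≤ x := by
    intro j
    by_cases h : j = i
    · subst h; simp [e, Pi.single_apply]
    · simp [e, Pi.single_apply, h]
      exact hx j
  rw [← h1]
  exact hN.2.2.2 _ _ h2 h3

lemma N_sum_le {ι : Type*} (s : Finset ι) (f : ι → Fin n → ℝ) :
    N (∑ i ∈ s, f i) ≤ ∑ i ∈ s, N (f i) := by
  classical
  induction s using Finset.induction with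
  | empty => simp [N_zero hN]
  | insert a s hnotmem ih =>
    rw [Finset.sum_insert hnotmem, Finset.sum_insert hnotmem]
    exact le_trans (hN.1 _ _) (by linarith)

lemma N_le_sum_abs (x : Fin n → ℝ) : N x ≤ ∑ i, |x i| * N (e i) := by
  have hx : x = ∑ i, x i • e i := by
    funext j
    rw [Finset.sum_apply]
    simp only [Pi.smul_apply, smul_eq_mul, e, Pi.single_apply]
    simp
  calc N x = N (∑ i, x i • e i) := by rw [← hx]
    _ ≤ ∑ i, N (x i • e i) := N_sum_le hN _ _
    _ = ∑ i, |x i| * N (e i) := by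
        apply Finset.sum_congr rfl
        intro i _
        rw [hN.2.1]

lemma N_lipschitz : Continuous N := by
  have key : ∀ x y : Fin n → ℝ, N x - N y ≤ ∑ i, |x i - y i| * N (e i) := by
    intro x y
    have h1 := hN.1 y (x - y)
    have h2 : y + (x - y) = x := by ring
    rw [h2] at h1
    have h3 := N_le_sum_abs hN (x - y)
    have : N (x - y) ≤ ∑ i, |x i - y i| * N (e i) := by
      simpa [Pi.sub_apply] using h3
    linarith
  rw [Metric.continuous_iff]
  intro b ε hε
  set C : ℝ := ∑ i, N (e i) + 1 with hC
  have hCpos : 0 < C := by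
    have : (0:ℝ) ≤ ∑ i, N (e i) := Finset.sum_nonneg fun i _ => N_nonneg hN _
    linarith
  refine ⟨ε / C, by positivity, fun a hab => ?_⟩
  have hbound : ∀ x y : Fin n → ℝ, dist x y < ε / C → |N x - N y| < ε := by
    intro x y hxy
    have h1 := key x y
    have h2 := key y x
    have hterm : ∀ i, |x i - y i| * N (e i) ≤ (ε / C) * N (e i) → True := fun _ _ => trivial
    have hsum : ∑ i, |x i - y i| * N (e i) < ε := by
      have hle : ∀ i : Fin n, |x i - y i| ≤ dist x y := by
        intro i
        have := dist_le_pi_dist x y i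
        simpa [Real.dist_eq] using this
      calc ∑ i, |x i - y i| * N (e i) ≤ ∑ i, dist x y * N (e i) :=
            Finset.sum_le_sum fun i _ => mul_le_mul_of_nonneg_right (hle i) (N_nonneg hN _)
        _ = dist x y * ∑ i, N (e i) := by rw [← Finset.mul_sum]
        _ ≤ dist x y * C := by
            have : ∑ i, N (e i) ≤ C := by simp [hC]
            exact mul_le_mul_of_nonneg_left this dist_nonneg
        _ < (ε / C) * C := by
            apply mul_lt_mul_of_pos_right hxy hCpos
        _ = ε := by field_simp
    have hsum2 : ∑ i, |y i - x i| * N (e i) < ε := by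
      convert hsum using 2 with i
      rw [abs_sub_comm]
    rw [abs_sub_lt_iff]
    constructor <;> linarith
  simpa [Real.dist_eq] using hbound a b hab

end Norm

section Dual

variable {N : (Fin n → ℝ) → ℝ}

/-- the positive dual ball -/
def dualSet (N : (Fin n → ℝ) → ℝ) : Set (Fin n → ℝ) :=
  {y | 0 ≤ y ∧ ∀ x, 0 ≤ x → dot x y ≤ N x}

/-- the primal "slice" -/
def slice (N : (Fin n → ℝ) → ℝ) : Set (Fin n → ℝ) := {x | 0 ≤ x ∧ N x ≤ 1}

/-- the (absolute) dual norm -/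
def Nh (N : (Fin n → ℝ) → ℝ) (w : Fin n → ℝ) : ℝ :=
  sSup ((fun x => dot x (absv w)) '' slice N)

variable (hN : IsMonotoneNorm N)
include hN

lemma slice_nonempty : (slice N).Nonempty :=
  ⟨0, le_refl _, by rw [N_zero hN]; norm_num⟩

lemma slice_bound {x : Fin n → ℝ} (hx : x ∈ slice N) (i : Fin n) : x i ≤ (N (e i))⁻¹ := by
  have h1 := coord_le hN x hx.1 i
  have h2 : x i * N (e i) ≤ 1 := le_trans h1 hx.2
  have := (le_div_iff₀ (N_e_pos hN i)).mpr h2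
  simpa [one_div] using this

lemma Nh_bddAbove (w : Fin n → ℝ) :
    BddAbove ((fun x => dot x (absv w)) '' slice N) := by
  refine ⟨∑ i, |w i| * (N (e i))⁻¹, ?_⟩
  rintro t ⟨x, hx, rfl⟩
  calc dot x (absv w) = ∑ i, x i * |w i| := rfl
    _ ≤ ∑ i, (N (e i))⁻¹ * |w i| := Finset.sum_le_sum fun i _ =>
        mul_le_mul_of_nonneg_right (slice_bound hN hx i) (abs_nonneg _)
    _ = ∑ i, |w i| * (N (e i))⁻¹ := by simp [mul_comm]

lemma le_Nh {x : Fin n → ℝ} (hx : 0 ≤ x) (hx1 : N x ≤ 1) (w : Fin n → ℝ) :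
    dot x (absv w) ≤ Nh N w :=
  le_csSup (Nh_bddAbove hN w) ⟨x, ⟨hx, hx1⟩, rfl⟩

lemma Nh_le {w : Fin n → ℝ} {t : ℝ}
    (h : ∀ x, 0 ≤ x → N x ≤ 1 → dot x (absv w) ≤ t) : Nh N w ≤ t :=
  csSup_le (Set.Nonempty.image _ (slice_nonempty hN)) (by rintro s ⟨x, hx, rfl⟩; exact h x hx.1 hx.2)

lemma Nh_nonneg (w : Fin n → ℝ) : 0 ≤ Nh N w := by
  have := le_Nh hN (le_refl (0 : Fin n → ℝ)) (by rw [N_zero hN]; norm_num) w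
  simpa [dot] using this

lemma Nh_le_sum (w : Fin n → ℝ) : Nh N w ≤ ∑ i, |w i| * (N (e i))⁻¹ := by
  apply Nh_le hN
  intro x hx hx1
  calc dot x (absv w) = ∑ i, x i * |w i| := rfl
    _ ≤ ∑ i, (N (e i))⁻¹ * |w i| := Finset.sum_le_sum fun i _ =>
        mul_le_mul_of_nonneg_right (slice_bound hN ⟨hx, hx1⟩ i) (abs_nonneg _)
    _ = ∑ i, |w i| * (N (e i))⁻¹ := by simp [mul_comm]

lemma Nh_zero : Nh N 0 = 0 :=
  le_antisymm (by simpa using Nh_le_sum hN 0) (Nh_nonneg hN 0)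

lemma abs_le_Nh (w : Fin n → ℝ) (i : Fin n) : |w i| ≤ N (e i) * Nh N w := by
  have hpos := N_e_pos hN i
  have hx : (0:Fin n → ℝ) ≤ (N (e i))⁻¹ • e i := by
    intro j
    simp only [Pi.smul_apply, smul_eq_mul, Pi.zero_apply]
    exact mul_nonneg (by positivity) (e_nonneg i j)
  have hx1 : N ((N (e i))⁻¹ • e i) ≤ 1 := by
    rw [hN.2.1, abs_of_nonneg (by positivity : (0:ℝ) ≤ (N (e i))⁻¹)]
    rw [inv_mul_cancel₀ (ne_of_gt hpos)]
  have := le_Nh hN hx hx1 w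
  have hdot : dot ((N (e i))⁻¹ • e i) (absv w) = (N (e i))⁻¹ * |w i| := by
    rw [dot_smul_left]
    congr 1
    simp only [dot, absv, e]
    rw [Finset.sum_eq_single i]
    · simp
    · intro j _ hj; simp [Pi.single_apply, hj]
    · simp
  rw [hdot] at this
  calc |w i| = N (e i) * ((N (e i))⁻¹ * |w i|) := by field_simp
    _ ≤ N (e i) * Nh N w := mul_le_mul_of_nonneg_left this (le_of_lt hpos)

lemma dot_le_N_mul_Nh {x : Fin n → ℝ} (hx : 0 ≤ x) (w : Fin n → ℝ) :
    dot x (absv w) ≤ N x * Nh N w := by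
  rcases eq_or_lt_of_le (N_nonneg hN x) with h | h
  · have hx0 : x = 0 := hN.2.2.1 x h.symm
    subst hx0
    have h0 : dot (0:Fin n → ℝ) (absv w) = 0 := by simp [dot]
    rw [h0, ← h, zero_mul]
  · have hx1 : N ((N x)⁻¹ • x) ≤ 1 := by
      rw [hN.2.1, abs_of_nonneg (by positivity : (0:ℝ) ≤ (N x)⁻¹)]
      rw [inv_mul_cancel₀ (ne_of_gt h)]
    have hxnn : (0:Fin n → ℝ) ≤ (N x)⁻¹ • x := by
      intro j
      simp only [Pi.smul_apply, smul_eq_mul, Pi.zero_apply]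
      exact mul_nonneg (by positivity) (hx j)
    have := le_Nh hN hxnn hx1 w
    rw [dot_smul_left] at this
    calc dot x (absv w) = N x * ((N x)⁻¹ * dot x (absv w)) := by field_simp
      _ ≤ N x * Nh N w := mul_le_mul_of_nonneg_left this (le_of_lt h)

omit hN in
lemma Nh_congr_abs {v w : Fin n → ℝ} (h : absv v = absv w) : Nh N v = Nh N w := by
  unfold Nh; rw [h]

lemma Nh_neg (w : Fin n → ℝ) : Nh N (-w) = Nh N w :=
  Nh_congr_abs (N:=N) (by funext i; simp [absv])

lemma Nh_add_le (v w : Fin n → ℝ) : Nh N (v + w) ≤ Nh N v + Nh N w := by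
  apply Nh_le hN
  intro x hx hx1
  have h1 : dot x (absv (v + w)) ≤ dot x (absv v + absv w) :=
    dot_mono_right hx (absv_add_le v w)
  have h2 : dot x (absv v + absv w) = dot x (absv v) + dot x (absv w) := by
    simp [dot, mul_add, Finset.sum_add_distrib]
  rw [h2] at h1
  exact le_trans h1 (add_le_add (le_Nh hN hx hx1 v) (le_Nh hN hx hx1 w))

lemma Nh_smul_le (c : ℝ) (w : Fin n → ℝ) : Nh N (c • w) ≤ |c| * Nh N w := by
  apply Nh_le hN
  intro x hx hx1
  have : dot x (absv (c • w)) = |c| * dot x (absv w) := by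
    rw [absv_smul]
    simp [dot, Finset.mul_sum]
    apply Finset.sum_congr rfl
    intro i _; ring
  rw [this]
  exact mul_le_mul_of_nonneg_left (le_Nh hN hx hx1 w) (abs_nonneg c)

lemma Nh_smul (c : ℝ) (w : Fin n → ℝ) : Nh N (c • w) = |c| * Nh N w := by
  rcases eq_or_ne c 0 with rfl | hc
  · simp [Nh_zero hN]
  · refine le_antisymm (Nh_smul_le hN c w) ?_
    have h2 := Nh_smul_le hN c⁻¹ (c • w)
    rw [smul_smul, inv_mul_cancel₀ hc, one_smul] at h2
    have habs : |c| > 0 := abs_pos.mpr hc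
    rw [abs_inv] at h2
    calc |c| * Nh N w ≤ |c| * (|c|⁻¹ * Nh N (c • w)) := mul_le_mul_of_nonneg_left h2 (le_of_lt habs)
      _ = Nh N (c • w) := by field_simp

lemma Nh_continuous : Continuous (Nh N) := by
  have key : ∀ a b : Fin n → ℝ, Nh N a - Nh N b ≤ ∑ i, |a i - b i| * (N (e i))⁻¹ := by
    intro a b
    have h1 : Nh N a ≤ Nh N (a - b) + Nh N b := by
      have := Nh_add_le hN (a - b) b
      simpa using this
    have h2 := Nh_le_sum hN (a - b)
    have h3 : Nh N (a - b) ≤ ∑ i, |a i - b i| * (N (e i))⁻¹ := by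
      calc Nh N (a - b) ≤ ∑ i, |(a - b) i| * (N (e i))⁻¹ := h2
        _ = ∑ i, |a i - b i| * (N (e i))⁻¹ := by apply Finset.sum_congr rfl; intro i _; simp
    linarith
  rw [Metric.continuous_iff]
  intro b ε hε
  set C : ℝ := ∑ i, (N (e i))⁻¹ + 1 with hC
  have hCpos : 0 < C := by
    rw [hC]
    have : (0:ℝ) ≤ ∑ i, (N (e i))⁻¹ :=
      Finset.sum_nonneg fun i _ => inv_nonneg.mpr (le_of_lt (N_e_pos hN i))
    linarith
  refine ⟨ε / C, by positivity, fun a hab => ?_⟩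
  have hsum : ∀ x y : Fin n → ℝ, dist x y < ε / C → ∑ i, |x i - y i| * (N (e i))⁻¹ < ε := by
    intro x y hxy
    have hle : ∀ i : Fin n, |x i - y i| ≤ dist x y := by
      intro i
      have := dist_le_pi_dist x y i
      simpa [Real.dist_eq] using this
    calc ∑ i, |x i - y i| * (N (e i))⁻¹ ≤ ∑ i, dist x y * (N (e i))⁻¹ :=
          Finset.sum_le_sum fun i _ => mul_le_mul_of_nonneg_right (hle i)
            (inv_nonneg.mpr (le_of_lt (N_e_pos hN i)))
      _ = dist x y * ∑ i, (N (e i))⁻¹ := by rw [← Finset.mul_sum]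
      _ ≤ dist x y * C := by
          have : ∑ i, (N (e i))⁻¹ ≤ C := by simp [hC]
          exact mul_le_mul_of_nonneg_left this dist_nonneg
      _ < (ε / C) * C := mul_lt_mul_of_pos_right hxy hCpos
      _ = ε := by field_simp
  have h1 := key a b
  have h2 := key b a
  have e1 := hsum a b hab
  have e2 := hsum b a (by rwa [dist_comm])
  rw [Real.dist_eq, abs_sub_lt_iff]
  constructor <;> linarith



omit hN in
lemma pi_repr (w : Fin n → ℝ) : w = ∑ i, w i • e i := by
  funext j
  rw [Finset.sum_apply]
  simp only [Pi.smul_apply, smul_eq_mul, e, Pi.single_apply]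
  simp

lemma exists_dual (x : Fin n → ℝ) (hx : 0 ≤ x) :
    ∃ z ∈ dualSet N, N x ≤ dot x z := by
  by_cases hx0 : N x = 0
  · refine ⟨0, ⟨le_refl _, fun x' hx' => ?_⟩, ?_⟩
    · have : dot x' 0 = 0 := by simp [dot]
      rw [this]; exact N_nonneg hN x'
    · have : dot x 0 = 0 := by simp [dot]
      rw [this, hx0]
  · have hpos : 0 < N x := lt_of_le_of_ne (N_nonneg hN x) (Ne.symm hx0)
    set s : Set (Fin n → ℝ) := {w | N w < N x} with hs
    have hconv : Convex ℝ s := by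
      intro a ha b hb p q hp hq hpq
      simp only [hs, Set.mem_setOf_eq] at ha hb ⊢
      have h1 : N (p • a + q • b) ≤ p * N a + q * N b := by
        calc N (p • a + q • b) ≤ N (p • a) + N (q • b) := hN.1 _ _
          _ = p * N a + q * N b := by rw [hN.2.1, hN.2.1, abs_of_nonneg hp, abs_of_nonneg hq]
      have h2 : p * N a ≤ p * N x := mul_le_mul_of_nonneg_left (le_of_lt ha) hp
      have h3 : q * N b ≤ q * N x := mul_le_mul_of_nonneg_left (le_of_lt hb) hq
      rcases lt_or_eq_of_le hp with hp' | hp'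
      · have : p * N a < p * N x := mul_lt_mul_of_pos_left ha hp'
        nlinarith
      · have hq1 : q = 1 := by linarith
        have : q * N b < q * N x := by rw [hq1]; simpa using hb
        nlinarith
    have hopen : IsOpen s := by
      have : s = N ⁻¹' (Set.Iio (N x)) := rfl
      rw [this]
      exact (N_lipschitz hN).isOpen_preimage _ isOpen_Iio
    have hxs : x ∉ s := by simp [hs]
    obtain ⟨f, hf⟩ := geometric_hahn_banach_open_point hconv hopen hxs
    have h0s : (0 : Fin n → ℝ) ∈ s := by simp [hs, N_zero hN, hpos]
    have hf0 : (0:ℝ) < f x := by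
      have := hf 0 h0s
      simpa using this
    have key : ∀ w, f w * N x ≤ N w * f x := by
      intro w
      by_contra hcon
      push_neg at hcon
      have hNw : 0 ≤ N w := N_nonneg hN w
      have hfw : 0 < f w := by
        by_contra hfw
        push_neg at hfw
        nlinarith
      have hu : ((f x / f w) • w) ∈ s := by
        simp only [hs, Set.mem_setOf_eq]
        rw [hN.2.1, abs_of_nonneg (le_of_lt (div_pos hf0 hfw))]
        rw [div_mul_eq_mul_div, div_lt_iff₀ hfw]
        nlinarith
      have := hf _ hu
      rw [map_smul] at this
      simp only [smul_eq_mul] at this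
      rw [div_mul_cancel₀ _ (ne_of_gt hfw)] at this
      exact lt_irrefl _ this
    set z₀ : Fin n → ℝ := fun i => (N x / f x) * f (e i) with hz₀
    have hdotz₀ : ∀ w, dot w z₀ = (N x / f x) * f w := by
      intro w
      have hw := pi_repr w
      have hfw : f w = ∑ i, w i * f (e i) := by
        conv_lhs => rw [hw]
        rw [map_sum]
        apply Finset.sum_congr rfl
        intro i _
        rw [map_smul]; rfl
      rw [hfw, dot, Finset.mul_sum]
      apply Finset.sum_congr rfl
      intro i _
      simp only [hz₀]
      ring
    have hz₀le : ∀ w, dot w z₀ ≤ N w := by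
      intro w
      rw [hdotz₀ w]
      rw [div_mul_eq_mul_div, div_le_iff₀ hf0]
      calc N x * f w = f w * N x := by ring
        _ ≤ N w * f x := key w
    have hdxz₀ : dot x z₀ = N x := by
      rw [hdotz₀ x, div_mul_cancel₀ _ (ne_of_gt hf0)]
    refine ⟨fun i => max (z₀ i) 0, ⟨fun i => le_max_right _ _, fun x' hx' => ?_⟩, ?_⟩
    · set x'' : Fin n → ℝ := fun i => if 0 ≤ z₀ i then x' i else 0 with hx''
      have heq : dot x' (fun i => max (z₀ i) 0) = dot x'' z₀ := by
        apply Finset.sum_congr rfl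
        intro i _
        simp only [hx'']
        by_cases h : 0 ≤ z₀ i
        · rw [if_pos h, max_eq_left h]
        · rw [if_neg h, max_eq_right (le_of_not_ge h), mul_zero, zero_mul]
      rw [heq]
      refine le_trans (hz₀le x'') (hN.2.2.2 x'' x' ?_ ?_)
      · intro i
        simp only [hx'']
        by_cases h : 0 ≤ z₀ i
        · rw [if_pos h]; exact hx' i
        · rw [if_neg h]; exact le_refl _
      · intro i
        simp only [hx'']
        by_cases h : 0 ≤ z₀ i
        · rw [if_pos h]
        · rw [if_neg h]; exact hx' i
    · rw [← hdxz₀]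
      exact dot_mono_right hx (fun i => le_max_left _ _)



lemma dual_Nh_le_one {y : Fin n → ℝ} (hy : y ∈ dualSet N) : Nh N y ≤ 1 := by
  apply Nh_le hN
  intro x hx hx1
  rw [absv_of_nonneg hy.1]
  exact le_trans (hy.2 x hx) hx1

open MeasureTheory Pointwise in
lemma card_bound (Y : Finset (Fin n → ℝ)) (hY : ∀ y ∈ Y, y ∈ dualSet N)
    (hsep : ∀ y ∈ Y, ∀ y' ∈ Y, y ≠ y' → 1/2 ≤ Nh N (y - y')) : Y.card ≤ 8 ^ n := by
  classical
  set Bo : Set (Fin n → ℝ) := {w | Nh N w < 4⁻¹} with hBo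
  set Bb : Set (Fin n → ℝ) := {w | Nh N w < 2} with hBb
  have hBo_open : IsOpen Bo := by
    have : Bo = Nh N ⁻¹' (Set.Iio 4⁻¹) := rfl
    rw [this]
    exact (Nh_continuous hN).isOpen_preimage _ isOpen_Iio
  have h0Bo : (0 : Fin n → ℝ) ∈ Bo := by
    simp only [hBo, Set.mem_setOf_eq, Nh_zero hN]
    norm_num
  have hBo_pos : 0 < volume Bo := hBo_open.measure_pos volume ⟨0, h0Bo⟩
  have hBb_bounded : Bornology.IsBounded Bb := by
    rw [Metric.isBounded_iff_subset_closedBall 0]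
    refine ⟨2 * ∑ i, N (e i), fun w hw => ?_⟩
    simp only [Metric.mem_closedBall, dist_zero_right]
    rw [pi_norm_le_iff_of_nonneg]
    · intro i
      have h1 := abs_le_Nh hN w i
      have h2 : Nh N w ≤ 2 := le_of_lt hw
      have h3 : N (e i) ≤ ∑ j, N (e j) :=
        Finset.single_le_sum (fun j _ => N_nonneg hN (e j)) (Finset.mem_univ i)
      have h4 : 0 ≤ N (e i) := N_nonneg hN _
      calc ‖w i‖ = |w i| := rfl
        _ ≤ N (e i) * Nh N w := h1
        _ ≤ N (e i) * 2 := mul_le_mul_of_nonneg_left h2 h4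
        _ ≤ (∑ j, N (e j)) * 2 := mul_le_mul_of_nonneg_right h3 (by norm_num)
        _ = 2 * ∑ j, N (e j) := by ring
    · have h4 : 0 ≤ ∑ j, N (e j) := Finset.sum_nonneg fun j _ => N_nonneg hN _
      linarith
  have hBb_lt_top : volume Bb < ⊤ := hBb_bounded.measure_lt_top
  have hscale : Bb = (8:ℝ) • Bo := by
    ext v
    rw [Set.mem_smul_set_iff_inv_smul_mem₀ (by norm_num : (8:ℝ) ≠ 0)]
    simp only [hBo, hBb, Set.mem_setOf_eq, Nh_smul hN]
    rw [abs_of_nonneg (by norm_num : (0:ℝ) ≤ 8⁻¹)]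
    constructor
    · intro h
      rw [inv_mul_lt_iff₀ (by norm_num : (0:ℝ) < 8)]
      linarith
    · intro h
      rw [inv_mul_lt_iff₀ (by norm_num : (0:ℝ) < 8)] at h
      linarith
  have hfinrank : Module.finrank ℝ (Fin n → ℝ) = n := by
    rw [Module.finrank_pi]
    exact Fintype.card_fin n
  have hvolBb : volume Bb = ENNReal.ofReal ((8:ℝ) ^ n) * volume Bo := by
    rw [hscale, Measure.addHaar_smul_of_nonneg volume (by norm_num : (0:ℝ) ≤ 8), hfinrank]
  -- translated balls
  set T : (Fin n → ℝ) → Set (Fin n → ℝ) := fun y => {w | Nh N (w - y) < 4⁻¹} with hT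
  have hT_pre : ∀ y, T y = (fun w => w + (-y)) ⁻¹' Bo := by
    intro y
    ext w
    simp only [hT, hBo, Set.mem_setOf_eq, Set.mem_preimage, sub_eq_add_neg]
  have hT_vol : ∀ y, volume (T y) = volume Bo := by
    intro y
    rw [hT_pre y]
    exact measure_preimage_add_right volume (-y) Bo
  have hT_meas : ∀ y, MeasurableSet (T y) := by
    intro y
    rw [hT_pre y]
    exact hBo_open.measurableSet.preimage (measurable_id.add_const (-y))
  have hT_sub : ∀ y ∈ Y, T y ⊆ Bb := by
    intro y hy w hw
    simp only [hT, Set.mem_setOf_eq] at hw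
    simp only [hBb, Set.mem_setOf_eq]
    have h1 : Nh N w ≤ Nh N (w - y) + Nh N y := by
      have := Nh_add_le hN (w - y) y
      simpa using this
    have h2 : Nh N y ≤ 1 := dual_Nh_le_one hN (hY y hy)
    linarith
  have hdisj : (↑Y : Set (Fin n → ℝ)).PairwiseDisjoint T := by
    intro y hy y' hy' hne
    rw [Function.onFun, Set.disjoint_left]
    intro w hw hw'
    simp only [hT, Set.mem_setOf_eq] at hw hw'
    have hsep' := hsep y (by exact_mod_cast hy) y' (by exact_mod_cast hy') hne
    have h1 : Nh N (y - y') ≤ Nh N (y - w) + Nh N (w - y') := by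
      have := Nh_add_le hN (y - w) (w - y')
      have heq : (y - w) + (w - y') = y - y' := by ring
      rwa [heq] at this
    have h2 : Nh N (y - w) = Nh N (w - y) := by
      rw [← Nh_neg hN (w - y)]
      congr 1
      ring
    linarith
  have hunion : volume (⋃ y ∈ Y, T y) = ∑ y ∈ Y, volume (T y) :=
    measure_biUnion_finset hdisj fun y _ => hT_meas y
  have hsub : (⋃ y ∈ Y, T y) ⊆ Bb := Set.iUnion₂_subset hT_sub
  have hle : (Y.card : ENNReal) * volume Bo ≤ ENNReal.ofReal ((8:ℝ) ^ n) * volume Bo := by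
    calc (Y.card : ENNReal) * volume Bo = ∑ y ∈ Y, volume (T y) := by
          rw [Finset.sum_congr rfl fun y _ => hT_vol y]
          simp [Finset.sum_const, nsmul_eq_mul]
      _ = volume (⋃ y ∈ Y, T y) := hunion.symm
      _ ≤ volume Bb := measure_mono hsub
      _ = ENNReal.ofReal ((8:ℝ) ^ n) * volume Bo := hvolBb
  have hBo_ne_top : volume Bo ≠ ⊤ := by
    have : volume Bo ≤ volume Bb := measure_mono (by
      intro w hw
      simp only [hBo, Set.mem_setOf_eq] at hw
      simp only [hBb, Set.mem_setOf_eq]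
      linarith)
    exact ne_top_of_le_ne_top (ne_of_lt hBb_lt_top) this
  have hcard : (Y.card : ENNReal) ≤ ENNReal.ofReal ((8:ℝ) ^ n) := by
    exact (ENNReal.mul_le_mul_iff_left (ne_of_gt hBo_pos) hBo_ne_top).mp hle
  have h8 : ENNReal.ofReal ((8:ℝ) ^ n) = ((8 ^ n : ℕ) : ENNReal) := by
    rw [ENNReal.ofReal_pow (by norm_num : (0:ℝ) ≤ 8)]
    norm_num
  rw [h8] at hcard
  exact_mod_cast hcard



lemma exists_net : ∃ Y : Finset (Fin n → ℝ), (∀ y ∈ Y, y ∈ dualSet N) ∧ Y.card ≤ 8 ^ n ∧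
    ∀ x, 0 ≤ x → ∃ y ∈ Y, N x / 2 ≤ dot x y := by
  classical
  set Sep : Finset (Fin n → ℝ) → Prop := fun Y =>
    (∀ y ∈ Y, y ∈ dualSet N) ∧ ∀ y ∈ Y, ∀ y' ∈ Y, y ≠ y' → 1/2 ≤ Nh N (y - y') with hSep
  set ks : Set ℕ := {k | ∃ Y, Sep Y ∧ Y.card = k} with hks
  have hks_ne : ks.Nonempty := ⟨0, ∅, ⟨by simp, by simp⟩, rfl⟩
  have hks_bdd : BddAbove ks := by
    refine ⟨8 ^ n, ?_⟩
    rintro k ⟨Y, ⟨hY1, hY2⟩, rfl⟩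
    exact card_bound hN Y hY1 hY2
  obtain ⟨Y, hYsep, hYcard⟩ := Nat.sSup_mem hks_ne hks_bdd
  have hcard_le : Y.card ≤ 8 ^ n := by
    rw [hYcard]
    apply csSup_le hks_ne
    rintro k ⟨Z, ⟨hZ1, hZ2⟩, rfl⟩
    exact card_bound hN Z hZ1 hZ2
  have hcover : ∀ z ∈ dualSet N, ∃ y ∈ Y, Nh N (z - y) < 1/2 := by
    intro z hz
    by_contra hcon
    push_neg at hcon
    have hzY : z ∉ Y := by
      intro hzin
      have := hcon z hzin
      rw [sub_self, Nh_zero hN] at this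
      linarith
    have hsep' : Sep (insert z Y) := by
      constructor
      · intro y hy
        rcases Finset.mem_insert.mp hy with rfl | hy'
        · exact hz
        · exact hYsep.1 y hy'
      · intro y hy y' hy' hne
        rcases Finset.mem_insert.mp hy with rfl | hy1 <;>
          rcases Finset.mem_insert.mp hy' with h | hy2
        · exact absurd h.symm hne
        · exact hcon y' hy2
        · subst h
          have := hcon y hy1
          have heq : Nh N (y - y') = Nh N (y' - y) := by
            rw [← Nh_neg hN (y' - y)]
            congr 1
            ring
          rw [heq]
          exact hcon y hy1
        · exact hYsep.2 y hy1 y' hy2 hne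
    have hc : Y.card + 1 ∈ ks := ⟨insert z Y, hsep', by rw [Finset.card_insert_of_notMem hzY]⟩
    have := le_csSup hks_bdd hc
    rw [← hYcard] at this
    omega
  refine ⟨Y, hYsep.1, hcard_le, ?_⟩
  intro x hx
  obtain ⟨z, hz, hxz⟩ := exists_dual hN x hx
  obtain ⟨y, hy, hzy⟩ := hcover z hz
  refine ⟨y, hy, ?_⟩
  have h1 : dot x (z - y) ≤ dot x (absv (z - y)) :=
    dot_mono_right hx (fun i => le_abs_self _)
  have h2 : dot x (absv (z - y)) ≤ N x * Nh N (z - y) := dot_le_N_mul_Nh hN hx (z - y)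
  have h3 : N x * Nh N (z - y) ≤ N x * (1/2) :=
    mul_le_mul_of_nonneg_left (le_of_lt hzy) (N_nonneg hN x)
  have h4 : dot x (z - y) = dot x z - dot x y := dot_sub_right x z y
  have := N_nonneg hN x
  nlinarith [h1, h2, h3]



lemma main_construction (hn : 1 ≤ n) :
    ∃ M : (Fin n → ℝ) → ℝ, IsMonotoneNorm M ∧ IsPSupermodular M ((1:ℝ) * n) ∧
      ∀ x : Fin n → ℝ, 0 ≤ x → N x ≤ M x ∧ M x ≤ 16 * N x := by
  classical
  obtain ⟨Y, hYdual, hYcard, hYnet⟩ := exists_net hN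
  have hn0 : n ≠ 0 := by omega
  have hn1 : (1:ℝ) ≤ (n:ℝ) := by exact_mod_cast hn
  set S : (Fin n → ℝ) → ℝ := fun x => ∑ y ∈ Y, dot (absv x) y ^ n with hS
  set M : (Fin n → ℝ) → ℝ := fun x => 2 * (S x) ^ ((n:ℝ)⁻¹) with hM
  have hdot_nn : ∀ (x : Fin n → ℝ), ∀ y ∈ Y, 0 ≤ dot (absv x) y := fun x y hy =>
    dot_nonneg (absv_nonneg x) (hYdual y hy).1
  have hS_nn : ∀ x, 0 ≤ S x := fun x =>
    Finset.sum_nonneg fun y hy => pow_nonneg (hdot_nn x y hy) n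
  have hM_nn : ∀ x, 0 ≤ M x := fun x =>
    mul_nonneg (by norm_num) (Real.rpow_nonneg (hS_nn x) _)
  -- triangle inequality
  have htri : ∀ a b, M (a + b) ≤ M a + M b := by
    intro a b
    set f : (Fin n → ℝ) → ℝ := fun y => dot (absv a) y with hf
    set g : (Fin n → ℝ) → ℝ := fun y => dot (absv b) y with hg
    have step1 : S (a + b) ≤ ∑ y ∈ Y, (f y + g y) ^ n := by
      apply Finset.sum_le_sum
      intro y hy
      apply pow_le_pow_left₀ (hdot_nn _ y hy)
      have h1 : dot (absv (a + b)) y ≤ dot (absv a + absv b) y :=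
        dot_mono_left (hYdual y hy).1 (absv_add_le a b)
      rw [dot_add_left] at h1
      exact h1
    have hfnn : ∀ y ∈ Y, 0 ≤ f y := fun y hy => hdot_nn a y hy
    have hgnn : ∀ y ∈ Y, 0 ≤ g y := fun y hy => hdot_nn b y hy
    have step2 : (∑ y ∈ Y, (f y + g y) ^ n : ℝ) ^ ((n:ℝ)⁻¹) ≤
        (S a) ^ ((n:ℝ)⁻¹) + (S b) ^ ((n:ℝ)⁻¹) := by
      have hLp := Real.Lp_add_le Y f g hn1
      have e1 : ∑ y ∈ Y, |f y + g y| ^ (n:ℝ) = ∑ y ∈ Y, (f y + g y) ^ n := by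
        apply Finset.sum_congr rfl
        intro y hy
        rw [abs_of_nonneg (add_nonneg (hfnn y hy) (hgnn y hy)), Real.rpow_natCast]
      have e2 : ∑ y ∈ Y, |f y| ^ (n:ℝ) = S a := by
        apply Finset.sum_congr rfl
        intro y hy
        rw [abs_of_nonneg (hfnn y hy), Real.rpow_natCast]
      have e3 : ∑ y ∈ Y, |g y| ^ (n:ℝ) = S b := by
        apply Finset.sum_congr rfl
        intro y hy
        rw [abs_of_nonneg (hgnn y hy), Real.rpow_natCast]
      rw [e1, e2, e3, one_div] at hLp
      exact hLp
    calc M (a + b) = 2 * (S (a + b)) ^ ((n:ℝ)⁻¹) := rfl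
      _ ≤ 2 * ((∑ y ∈ Y, (f y + g y) ^ n : ℝ)) ^ ((n:ℝ)⁻¹) := by
          apply mul_le_mul_of_nonneg_left _ (by norm_num : (0:ℝ) ≤ 2)
          exact Real.rpow_le_rpow (hS_nn _) step1 (by positivity)
      _ ≤ 2 * ((S a) ^ ((n:ℝ)⁻¹) + (S b) ^ ((n:ℝ)⁻¹)) :=
          mul_le_mul_of_nonneg_left step2 (by norm_num)
      _ = M a + M b := by rw [hM]; ring
  -- homogeneity
  have hhom : ∀ (c : ℝ) (x), M (c • x) = |c| * M x := by
    intro c x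
    have hSc : S (c • x) = |c| ^ n * S x := by
      rw [hS]
      simp only
      rw [Finset.mul_sum]
      apply Finset.sum_congr rfl
      intro y hy
      rw [absv_smul, dot_smul_left, mul_pow]
    calc M (c • x) = 2 * (|c| ^ n * S x) ^ ((n:ℝ)⁻¹) := by rw [hM]; simp only; rw [hSc]
      _ = 2 * (|c| * (S x) ^ ((n:ℝ)⁻¹)) := by
          rw [Real.mul_rpow (by positivity) (hS_nn x),
            Real.pow_rpow_inv_natCast (abs_nonneg c) hn0]
      _ = |c| * M x := by rw [hM]; ring
  -- lower bound
  have hlow : ∀ x, 0 ≤ x → N x ≤ M x := by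
    intro x hx
    obtain ⟨y, hy, hxy⟩ := hYnet x hx
    have habs : absv x = x := absv_of_nonneg hx
    have h1 : (N x / 2) ^ n ≤ S x := by
      have : (N x / 2) ^ n ≤ dot (absv x) y ^ n := by
        apply pow_le_pow_left₀ (by have := N_nonneg hN x; positivity)
        rw [habs]; exact hxy
      refine le_trans this ?_
      exact Finset.single_le_sum (fun z hz => pow_nonneg (hdot_nn x z hz) n) hy
    have h2 : ((N x / 2) ^ n : ℝ) ^ ((n:ℝ)⁻¹) ≤ (S x) ^ ((n:ℝ)⁻¹) :=
      Real.rpow_le_rpow (by have := N_nonneg hN x; positivity) h1 (by positivity)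
    rw [Real.pow_rpow_inv_natCast (by have := N_nonneg hN x; positivity) hn0] at h2
    have := N_nonneg hN x
    calc N x = 2 * (N x / 2) := by ring
      _ ≤ 2 * (S x) ^ ((n:ℝ)⁻¹) := mul_le_mul_of_nonneg_left h2 (by norm_num)
      _ = M x := rfl
  -- upper bound
  have hup : ∀ x, 0 ≤ x → M x ≤ 16 * N x := by
    intro x hx
    have habs : absv x = x := absv_of_nonneg hx
    have h1 : S x ≤ (8 * N x) ^ n := by
      have hterm : ∀ y ∈ Y, dot (absv x) y ^ n ≤ N x ^ n := by
        intro y hy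
        apply pow_le_pow_left₀ (hdot_nn x y hy)
        rw [habs]
        exact (hYdual y hy).2 x hx
      calc S x ≤ ∑ _y ∈ Y, N x ^ n := Finset.sum_le_sum hterm
        _ = Y.card * N x ^ n := by rw [Finset.sum_const, nsmul_eq_mul]
        _ ≤ (8 ^ n : ℕ) * N x ^ n := by
            apply mul_le_mul_of_nonneg_right _ (pow_nonneg (N_nonneg hN x) n)
            exact_mod_cast hYcard
        _ = (8 * N x) ^ n := by rw [mul_pow]; norm_num
    have h2 : (S x) ^ ((n:ℝ)⁻¹) ≤ ((8 * N x) ^ n : ℝ) ^ ((n:ℝ)⁻¹) :=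
      Real.rpow_le_rpow (hS_nn x) h1 (by positivity)
    rw [Real.pow_rpow_inv_natCast (by have := N_nonneg hN x; positivity) hn0] at h2
    calc M x = 2 * (S x) ^ ((n:ℝ)⁻¹) := rfl
      _ ≤ 2 * (8 * N x) := mul_le_mul_of_nonneg_left h2 (by norm_num)
      _ = 16 * N x := by ring
  -- separation
  have hsep : ∀ x, M x = 0 → x = 0 := by
    intro x hx
    have hS0 : S x = 0 := by
      by_contra hS0
      have : 0 < S x := lt_of_le_of_ne (hS_nn x) (Ne.symm hS0)
      have hpos : 0 < M x := mul_pos (by norm_num) (Real.rpow_pos_of_pos this _)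
      rw [hx] at hpos
      exact lt_irrefl _ hpos
    have hax : 0 ≤ absv x := absv_nonneg x
    obtain ⟨y, hy, hxy⟩ := hYnet (absv x) hax
    have hterm : dot (absv x) y ^ n = 0 := by
      have := (Finset.sum_eq_zero_iff_of_nonneg
        (fun z hz => pow_nonneg (hdot_nn x z hz) n)).mp hS0 y hy
      have habs2 : absv (absv x) = absv x := absv_of_nonneg hax
      rw [hS] at hS0
      -- `this` is already the desired statement modulo absv (absv x) = absv x?
      exact this
    have hdot0 : dot (absv x) y = 0 := by
      have := pow_eq_zero_iff hn0 |>.mp hterm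
      exact this
    have hNx : N (absv x) = 0 := by
      have h1 : N (absv x) / 2 ≤ 0 := by rw [← hdot0]; exact hxy
      have h2 : 0 ≤ N (absv x) := N_nonneg hN _
      linarith
    have := hN.2.2.1 _ hNx
    funext i
    have hi := congr_fun this i
    simp only [absv, Pi.zero_apply] at hi ⊢
    exact abs_eq_zero.mp hi
  -- monotonicity
  have hmono : ∀ x y : Fin n → ℝ, 0 ≤ x → x ≤ y → M x ≤ M y := by
    intro x z hx hxz
    have hz : 0 ≤ z := le_trans hx hxz
    have h1 : S x ≤ S z := by
      apply Finset.sum_le_sum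
      intro y hy
      apply pow_le_pow_left₀ (hdot_nn x y hy)
      rw [absv_of_nonneg hx, absv_of_nonneg hz]
      exact dot_mono_left (hYdual y hy).1 hxz
    apply mul_le_mul_of_nonneg_left _ (by norm_num : (0:ℝ) ≤ 2)
    exact Real.rpow_le_rpow (hS_nn x) h1 (by positivity)
  -- supermodularity
  have hMpow : ∀ x, M x ^ ((1:ℝ) * n) = 2 ^ n * S x := by
    intro x
    have he : ((1:ℝ) * n) = ((n:ℕ) : ℝ) := by rw [one_mul]
    rw [he, Real.rpow_natCast, hM]
    simp only
    rw [mul_pow, Real.rpow_inv_natCast_pow (hS_nn x) hn0]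
  have hsuper : IsPSupermodular M ((1:ℝ) * n) := by
    intro u v w hu hv hw
    rw [hMpow, hMpow, hMpow, hMpow]
    have huv : (0:Fin n → ℝ) ≤ u + v := add_nonneg hu hv
    have huw : (0:Fin n → ℝ) ≤ u + w := add_nonneg hu hw
    have huvw : (0:Fin n → ℝ) ≤ u + v + w := add_nonneg huv hw
    have hdiff : S (u + w) - S u ≤ S (u + v + w) - S (u + v) := by
      rw [hS]
      simp only
      rw [← Finset.sum_sub_distrib, ← Finset.sum_sub_distrib]
      apply Finset.sum_le_sum
      intro y hy
      have hynn := (hYdual y hy).1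
      rw [absv_of_nonneg hu, absv_of_nonneg huv, absv_of_nonneg huw, absv_of_nonneg huvw,
        dot_add_left, dot_add_left, dot_add_left]
      have ha : 0 ≤ dot u y := dot_nonneg hu hynn
      have hb : 0 ≤ dot v y := dot_nonneg hv hynn
      have hc : 0 ≤ dot w y := dot_nonneg hw hynn
      have := pow_diff_mono (a := dot u y) (a' := dot u y + dot v y) (c := dot w y) n ha hc
        (by linarith)
      convert this using 2
    nlinarith [hdiff, pow_pos (by norm_num : (0:ℝ) < 2) n]
  refine ⟨M, ⟨htri, hhom, hsep, hmono⟩, hsuper, fun x hx => ⟨hlow x hx, hup x hx⟩⟩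

end Dual

end MNA

/-- Every monotone norm on ℝⁿ can be `O(1)`-approximated by an `O(n)`-supermodular
monotone norm. -/
theorem monotoneNorm_nSupermodular_approx :
    ∃ C₁ C₂ : ℝ, 1 ≤ C₁ ∧ 1 ≤ C₂ ∧ ∀ n : ℕ, 1 ≤ n →
      ∀ N : (Fin n → ℝ) → ℝ, IsMonotoneNorm N →
        ∃ M : (Fin n → ℝ) → ℝ, IsMonotoneNorm M ∧
          IsPSupermodular M (C₁ * n) ∧
          ∀ x : Fin n → ℝ, 0 ≤ x → N x ≤ M x ∧ M x ≤ C₂ * N x := by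
  refine ⟨1, 16, le_refl 1, by norm_num, ?_⟩
  intro n hn N hN
  exact MNA.main_construction hN hn
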